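/- Let $(\theta_1^\star, \ldots, \theta_N^\star)$ be an optimal solution to the discrete beamforming problem with optimal total channel $g \neq 0$. Then the argument of $g$ deviates from the argument $\alpha_0$ of the direct channel $h_0$ by strictly less than $2\pi/K$ in circular distance: $d(\angle g, \alpha_0) < 2\pi/K$. -/

import Mathlib

open Real Complex

/-- Circular distance on ℝ / 2πℤ. -/
noncomputable def cdist (x y : ℝ) : ℝ := sInf (Set.range fun m : ℤ => |x - y + 2 * π * m|)

/-- The discrete phase-shift set Φ_K = {ω, 2ω, …, Kω}, ω = 2π/K. -/
def Phi (K : ℕ) : Set ℝ := {θ | ∃ k : ℕ, 1 ≤ k ∧ k ≤ K ∧ θ = k * (2 * π / K)}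

lemma aux_exp_nat_omega (K : ℕ) (hK : K ≠ 0) :
    Complex.exp ((((K : ℝ) * (2 * π / K) : ℝ) : ℂ) * Complex.I) = 1 := by
  have hK0 : (K : ℝ) ≠ 0 := Nat.cast_ne_zero.mpr hK
  have h : ((K : ℝ) * (2 * π / K) : ℝ) = 2 * π := by field_simp
  rw [h]
  push_cast
  exact Complex.exp_two_pi_mul_I

lemma aux_phi_shift_up (K : ℕ) (hK : 2 ≤ K) {θ : ℝ} (hθ : θ ∈ Phi K) :
    ∃ θ' ∈ Phi K, Complex.exp ((θ' : ℂ) * Complex.I)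
      = Complex.exp (((2 * π / K : ℝ) : ℂ) * Complex.I) * Complex.exp ((θ : ℂ) * Complex.I) := by
  obtain ⟨k, hk1, hkK, rfl⟩ := hθ
  by_cases hkeq : k = K
  · refine ⟨((1 : ℕ) : ℝ) * (2 * π / K), ⟨1, le_rfl, by omega, rfl⟩, ?_⟩
    rw [hkeq, aux_exp_nat_omega K (by omega), mul_one]
    congr 1
    push_cast
    ring
  · refine ⟨((k + 1 : ℕ) : ℝ) * (2 * π / K), ⟨k + 1, by omega, by omega, rfl⟩, ?_⟩
    rw [← Complex.exp_add]
    congr 1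
    push_cast
    ring

lemma aux_phi_shift_down (K : ℕ) (hK : 2 ≤ K) {θ : ℝ} (hθ : θ ∈ Phi K) :
    ∃ θ' ∈ Phi K, Complex.exp ((θ' : ℂ) * Complex.I)
      = Complex.exp (((-(2 * π / K) : ℝ) : ℂ) * Complex.I) * Complex.exp ((θ : ℂ) * Complex.I) := by
  obtain ⟨k, hk1, hkK, rfl⟩ := hθ
  by_cases hkeq : k = 1
  · refine ⟨((K : ℕ) : ℝ) * (2 * π / K), ⟨K, by omega, le_rfl, rfl⟩, ?_⟩
    subst hkeq
    rw [aux_exp_nat_omega K (by omega), ← Complex.exp_add]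
    rw [show ((-(2 * π / (K : ℝ)) : ℝ) : ℂ) * Complex.I
        + ((((1 : ℕ) : ℝ) * (2 * π / (K : ℝ)) : ℝ) : ℂ) * Complex.I = 0 from by push_cast; ring]
    exact Complex.exp_zero.symm
  · refine ⟨((k - 1 : ℕ) : ℝ) * (2 * π / K), ⟨k - 1, by omega, by omega, rfl⟩, ?_⟩
    rw [← Complex.exp_add]
    congr 1
    have hcast : ((k - 1 : ℕ) : ℝ) = (k : ℝ) - 1 := by
      push_cast [Nat.cast_sub hk1]
      ring
    rw [hcast]
    push_cast
    ring

/-- Trig lemma: if shifting the phase by ±ω does not increase the cosine,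
then the phase is within ω/2 of zero. -/
lemma aux_trig {ω ψ : ℝ} (hω0 : 0 < ω) (hωπ : ω ≤ π) (hψ1 : -π < ψ) (hψ2 : ψ ≤ π)
    (h1 : Real.cos (ψ + ω) ≤ Real.cos ψ) (h2 : Real.cos (ψ - ω) ≤ Real.cos ψ) :
    |ψ| ≤ ω / 2 := by
  have hpi := Real.pi_pos
  by_contra hc
  push_neg at hc
  have hsω : 0 < Real.sin (ω / 2) :=
    Real.sin_pos_of_pos_of_lt_pi (by linarith) (by linarith)
  rcases (lt_abs.mp hc) with hψ | hψ
  · -- ψ > ω/2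
    have key := Real.cos_sub_cos ψ (ψ - ω)
    have e1 : (ψ + (ψ - ω)) / 2 = ψ - ω / 2 := by ring
    have e2 : (ψ - (ψ - ω)) / 2 = ω / 2 := by ring
    rw [e1, e2] at key
    have hs : 0 < Real.sin (ψ - ω / 2) :=
      Real.sin_pos_of_pos_of_lt_pi (by linarith) (by linarith)
    nlinarith [mul_pos hs hsω]
  · -- ψ < -ω/2
    have key := Real.cos_sub_cos ψ (ψ + ω)
    have e1 : (ψ + (ψ + ω)) / 2 = ψ + ω / 2 := by ring
    have e2 : (ψ - (ψ + ω)) / 2 = -(ω / 2) := by ring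
    rw [e1, e2, Real.sin_neg] at key
    have hs : Real.sin (ψ + ω / 2) < 0 :=
      Real.sin_neg_of_neg_of_neg_pi_lt (by linarith) (by linarith)
    nlinarith [mul_pos (neg_pos.mpr hs) hsω]

/-- Adding a positive real to a complex number in the closed cone of half-angle
`t ≤ π/2` around the positive real axis stays in the cone. -/
lemma aux_arg_add {b : ℝ} (hb : 0 < b) (s : ℂ) {t : ℝ} (ht0 : 0 ≤ t) (ht : t ≤ π / 2)
    (hs : |Complex.arg s| ≤ t) : |Complex.arg ((b : ℂ) + s)| ≤ t := by
  rcases eq_or_ne s 0 with rfl | hs0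
  · rw [add_zero, Complex.arg_ofReal_of_nonneg hb.le]
    simpa using ht0
  · have hres : 0 ≤ s.re :=
      Complex.abs_arg_le_pi_div_two_iff.mp (hs.trans ht)
    set u : ℂ := (b : ℂ) + s with hu
    have hure : u.re = b + s.re := by simp [hu]
    have huim : u.im = s.im := by simp [hu]
    have hupos : 0 < u.re := by rw [hure]; linarith
    have hu0 : u ≠ 0 := fun h => by simp [h] at hupos
    have habsu : 0 < ‖u‖ := norm_pos_iff.mpr hu0
    have habss : 0 < ‖s‖ := norm_pos_iff.mpr hs0
    have habs : ‖s‖ ≤ ‖u‖ := by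
      rw [Complex.norm_def, Complex.norm_def]
      apply Real.sqrt_le_sqrt
      rw [Complex.normSq_apply, Complex.normSq_apply, hure, huim]
      nlinarith
    have hsint : 0 ≤ Real.sin t :=
      Real.sin_nonneg_of_nonneg_of_le_pi ht0 (by linarith [Real.pi_pos])
    -- |s.im| ≤ sin t * abs s
    have hsinarg : |Real.sin (Complex.arg s)| ≤ Real.sin t := by
      have harg1 : -(π / 2) ≤ Complex.arg s := by
        have := abs_le.mp (hs.trans ht)
        linarith [this.1]
      have harg2 : Complex.arg s ≤ π / 2 := by
        have := abs_le.mp (hs.trans ht)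
        linarith [this.2]
      have hmem1 : Complex.arg s ∈ Set.Icc (-(π / 2)) (π / 2) := ⟨harg1, harg2⟩
      have hmemt : t ∈ Set.Icc (-(π / 2)) (π / 2) := ⟨by linarith, ht⟩
      have hmemnt : -t ∈ Set.Icc (-(π / 2)) (π / 2) := ⟨by linarith, by linarith⟩
      have hle := abs_le.mp hs
      rw [abs_le]
      constructor
      · have := Real.strictMonoOn_sin.monotoneOn hmemnt hmem1 hle.1
        rwa [Real.sin_neg] at this
      · exact Real.strictMonoOn_sin.monotoneOn hmem1 hmemt hle.2
    have him : |s.im| ≤ Real.sin t * ‖s‖ := by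
      have h1 : Real.sin (Complex.arg s) = s.im / ‖s‖ := Complex.sin_arg s
      have h2 : s.im = Real.sin (Complex.arg s) * ‖s‖ := by
        rw [h1]; field_simp
      rw [h2, abs_mul, abs_of_pos habss]
      exact mul_le_mul_of_nonneg_right hsinarg habss.le
    have himu : |u.im| ≤ Real.sin t * ‖u‖ := by
      rw [huim]
      calc |s.im| ≤ Real.sin t * ‖s‖ := him
        _ ≤ Real.sin t * ‖u‖ := by
            exact mul_le_mul_of_nonneg_left habs hsint
    have harg : Complex.arg u = Real.arcsin (u.im / ‖u‖) :=
      Complex.arg_of_re_nonneg hupos.le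
    have hdiv1 : u.im / ‖u‖ ≤ Real.sin t := by
      rw [div_le_iff₀ habsu]
      calc u.im ≤ |u.im| := le_abs_self _
        _ ≤ Real.sin t * ‖u‖ := himu
    have hdiv2 : -Real.sin t ≤ u.im / ‖u‖ := by
      rw [le_div_iff₀ habsu]
      have : -u.im ≤ |u.im| := neg_le_abs _
      nlinarith
    rw [harg, abs_le]
    constructor
    · have h1 : Real.arcsin (Real.sin (-t)) ≤ Real.arcsin (u.im / ‖u‖) := by
        apply Real.monotone_arcsin
        rw [Real.sin_neg]
        exact hdiv2
      rwa [Real.arcsin_sin (by linarith) (by linarith)] at h1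
    · have h1 : Real.arcsin (u.im / ‖u‖) ≤ Real.arcsin (Real.sin t) :=
        Real.monotone_arcsin hdiv1
      rwa [Real.arcsin_sin (by linarith) (by linarith)] at h1

theorem stmt_10 (K N : ℕ) (hK : 2 ≤ K) (β α : Fin (N + 1) → ℝ) (hβ : ∀ n, 0 < β n)
    (h : Fin (N + 1) → ℂ)
    (hh : ∀ n, h n = (β n : ℂ) * Complex.exp ((α n : ℂ) * Complex.I))
    (θs : Fin N → ℝ) (hθs : ∀ n, θs n ∈ Phi K)
    (hmax : ∀ θ : Fin N → ℝ, (∀ n, θ n ∈ Phi K) →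
      ‖h 0 + ∑ n : Fin N, h n.succ * Complex.exp (θ n * Complex.I)‖
        ≤ ‖h 0 + ∑ n : Fin N, h n.succ * Complex.exp (θs n * Complex.I)‖)
    (g : ℂ) (hg : g = h 0 + ∑ n : Fin N, h n.succ * Complex.exp (θs n * Complex.I))
    (hg0 : g ≠ 0) :
    cdist g.arg (α 0) < 2 * π / K := by
  have hpi := Real.pi_pos
  have hK2 : (2 : ℝ) ≤ (K : ℝ) := by exact_mod_cast hK
  have hKpos : (0 : ℝ) < K := by linarith
  set ω : ℝ := 2 * π / K with hωdef
  have hω0 : 0 < ω := by positivity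
  have hωπ : ω ≤ π := by
    rw [hωdef, div_le_iff₀ hKpos]
    nlinarith
  set r : ℂ := ∑ n : Fin N, h n.succ * Complex.exp ((θs n : ℂ) * Complex.I) with hr
  have h0ne : h 0 ≠ 0 := by
    rw [hh 0]
    exact mul_ne_zero (Complex.ofReal_ne_zero.mpr (hβ 0).ne') (Complex.exp_ne_zero _)
  -- Step A: shifted configurations are admissible
  have shift : ∀ e : ℂ,
      (∀ θ ∈ Phi K, ∃ θ' ∈ Phi K, Complex.exp ((θ' : ℂ) * Complex.I)
          = e * Complex.exp ((θ : ℂ) * Complex.I)) →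
      ‖h 0 + e * r‖ ≤ ‖g‖ := by
    intro e he
    choose f hf1 hf2 using fun n => he (θs n) (hθs n)
    have hmf := hmax f hf1
    have hsum : (∑ n : Fin N, h n.succ * Complex.exp ((f n : ℂ) * Complex.I)) = e * r := by
      rw [hr, Finset.mul_sum]
      exact Finset.sum_congr rfl fun n _ => by rw [hf2]; ring
    rw [hsum] at hmf
    rw [hg]
    exact hmf
  have hup : ‖h 0 + Complex.exp (((ω : ℝ) : ℂ) * Complex.I) * r‖
      ≤ ‖g‖ :=
    shift _ (fun θ hθ => by rw [hωdef]; exact aux_phi_shift_up K hK hθ)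
  have hdn : ‖h 0 + Complex.exp (((-ω : ℝ) : ℂ) * Complex.I) * r‖
      ≤ ‖g‖ :=
    shift _ (fun θ hθ => by rw [hωdef]; exact aux_phi_shift_down K hK hθ)
  -- Step B: derive real-part inequalities
  set z : ℂ := h 0 * (starRingEnd ℂ) r with hz
  have step : ∀ t : ℝ, ‖h 0 + Complex.exp (((t : ℝ) : ℂ) * Complex.I) * r‖
      ≤ ‖g‖ →
      (z * Complex.exp (((-t : ℝ) : ℂ) * Complex.I)).re ≤ z.re := by
    intro t hle
    set e : ℂ := Complex.exp (((t : ℝ) : ℂ) * Complex.I) with he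
    have habse : ‖e‖ = 1 := Complex.norm_exp_ofReal_mul_I t
    have h2 : Complex.normSq (h 0 + e * r) ≤ Complex.normSq (h 0 + r) := by
      rw [← Complex.sq_norm, ← Complex.sq_norm]
      have hgr : ‖h 0 + r‖ = ‖g‖ := by rw [hg]
      rw [hgr]
      exact pow_le_pow_left₀ (norm_nonneg _) hle 2
    rw [Complex.normSq_add, Complex.normSq_add] at h2
    have h3 : Complex.normSq (e * r) = Complex.normSq r := by
      rw [Complex.normSq_mul, ← Complex.sq_norm e, habse]
      ring
    rw [h3] at h2
    have hce : (starRingEnd ℂ) e = Complex.exp (((-t : ℝ) : ℂ) * Complex.I) := by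
      rw [he, ← Complex.exp_conj]
      congr 1
      simp [Complex.conj_I]
    have h4 : (h 0 * (starRingEnd ℂ) (e * r)) = z * Complex.exp (((-t : ℝ) : ℂ) * Complex.I) := by
      rw [map_mul, hce, hz]
      ring
    have h5 : (h 0 * (starRingEnd ℂ) (e * r)).re
        = (z * Complex.exp (((-t : ℝ) : ℂ) * Complex.I)).re := by rw [h4]
    linarith
  -- |arg s| ≤ ω/2 where s = r * exp(-α₀ i)
  set s : ℂ := r * Complex.exp (((-(α 0) : ℝ) : ℂ) * Complex.I) with hs
  have hargs : |Complex.arg s| ≤ ω / 2 := by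
    rcases eq_or_ne r 0 with hr0 | hr0
    · rw [hs, hr0, zero_mul]
      simp [Complex.arg_zero]
      positivity
    · have hz0 : z ≠ 0 := mul_ne_zero h0ne (by simpa using hr0)
      have habsz : 0 < ‖z‖ := norm_pos_iff.mpr hz0
      have key : ∀ t : ℝ, (z * Complex.exp (((t : ℝ) : ℂ) * Complex.I)).re
          = ‖z‖ * Real.cos (Complex.arg z + t) := by
        intro t
        conv_lhs => rw [← Complex.norm_mul_exp_arg_mul_I z]
        rw [mul_assoc, ← Complex.exp_add]
        rw [show ((Complex.arg z : ℂ)) * Complex.I + ((t : ℝ) : ℂ) * Complex.I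
            = ((Complex.arg z + t : ℝ) : ℂ) * Complex.I from by push_cast; ring]
        rw [Complex.re_ofReal_mul, Complex.exp_ofReal_mul_I_re]
      have hzre : z.re = ‖z‖ * Real.cos (Complex.arg z) := by
        rw [Complex.cos_arg hz0]
        field_simp
      have c1 : Real.cos (Complex.arg z + ω) ≤ Real.cos (Complex.arg z) := by
        have h1 := step (-ω) hdn
        rw [show (- -ω : ℝ) = ω from neg_neg ω, key ω, hzre] at h1
        exact le_of_mul_le_mul_left (by linarith) habsz
      have c2' : Real.cos (Complex.arg z - ω) ≤ Real.cos (Complex.arg z) := by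
        have h1 := step ω hup
        rw [key (-ω), hzre] at h1
        rw [sub_eq_add_neg]
        exact le_of_mul_le_mul_left (by linarith) habsz
      have hψ : |Complex.arg z| ≤ ω / 2 :=
        aux_trig hω0 hωπ (Complex.neg_pi_lt_arg z) (Complex.arg_le_pi z) c1 c2'
      -- relate arg s to arg z
      have hconj : (starRingEnd ℂ) z = ((β 0 : ℝ) : ℂ) * s := by
        rw [hz, map_mul, Complex.conj_conj, hh 0, map_mul, Complex.conj_ofReal, hs,
          ← Complex.exp_conj]
        rw [show (starRingEnd ℂ) (((α 0 : ℝ) : ℂ) * Complex.I)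
            = ((-(α 0) : ℝ) : ℂ) * Complex.I from by
          rw [map_mul, Complex.conj_ofReal, Complex.conj_I]; push_cast; ring]
        ring
      have hargconj : Complex.arg s = Complex.arg ((starRingEnd ℂ) z) := by
        rw [hconj, Complex.arg_real_mul s (hβ 0)]
      rw [hargconj, Complex.arg_conj]
      split_ifs with hπ
      · rw [hπ] at hψ
        rw [abs_of_pos hpi] at hψ
        rw [abs_of_pos hpi]
        exact hψ
      · rwa [abs_neg]
  -- geometric step
  set u : ℂ := ((β 0 : ℝ) : ℂ) + s with hu
  have hargu : |Complex.arg u| ≤ ω / 2 :=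
    aux_arg_add (hβ 0) s (by positivity) (by linarith) hargs
  have hgu : g * Complex.exp (((-(α 0) : ℝ) : ℂ) * Complex.I) = u := by
    rw [hg, hh 0, hu, hs, add_mul]
    congr 1
    rw [mul_assoc, ← Complex.exp_add]
    rw [show ((α 0 : ℝ) : ℂ) * Complex.I + ((-(α 0) : ℝ) : ℂ) * Complex.I = 0 from by
      push_cast; ring]
    rw [Complex.exp_zero, mul_one]
  -- angle bookkeeping
  have hang : (Complex.arg u : Real.Angle) = ((g.arg + -(α 0) : ℝ) : Real.Angle) := by
    rw [← hgu, Complex.arg_mul_coe_angle hg0 (Complex.exp_ne_zero _), Real.Angle.coe_add]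
    congr 1
    rw [Complex.arg_exp_mul_I]
    rw [Real.Angle.angle_eq_iff_two_pi_dvd_sub]
    refine ⟨-(toIocDiv (mul_pos two_pos Real.pi_pos) (-π) (-(α 0))), ?_⟩
    have hmod := toIocMod_add_toIocDiv_zsmul (mul_pos two_pos Real.pi_pos) (-π) (-(α 0))
    rw [zsmul_eq_mul] at hmod
    push_cast at hmod ⊢
    linarith
  obtain ⟨m, hm⟩ := Real.Angle.angle_eq_iff_two_pi_dvd_sub.mp hang
  have hmem : |Complex.arg u| ∈ Set.range (fun m : ℤ => |g.arg - α 0 + 2 * π * m|) := by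
    refine ⟨m, ?_⟩
    show |g.arg - α 0 + 2 * π * (m : ℝ)| = |Complex.arg u|
    congr 1
    linarith
  have hbdd : BddBelow (Set.range fun m : ℤ => |g.arg - α 0 + 2 * π * m|) := by
    refine ⟨0, ?_⟩
    rintro x ⟨m, rfl⟩
    positivity
  have hle : cdist g.arg (α 0) ≤ |Complex.arg u| := csInf_le hbdd hmem
  have hfin : cdist g.arg (α 0) ≤ ω / 2 := hle.trans hargu
  have : cdist g.arg (α 0) < ω := by linarith
  rwa [hωdef] at this
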